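/- The polynomial f(x_1, x_2) = x_1^2 - 2 x_1 x_2 + x_2^2 is symmetric and is a sum of squares in R[x_1, x_2], but it is not a sum of squares of symmetric polynomials. -/

import Mathlib

open MvPolynomial

theorem symmetric_sos_not_symmetric_squares :
    ((X 0) ^ 2 - 2 * X 0 * X 1 + (X 1) ^ 2 : MvPolynomial (Fin 2) ℝ).IsSymmetric ∧
    (∃ (k : ℕ) (q : Fin k → MvPolynomial (Fin 2) ℝ),
      ((X 0) ^ 2 - 2 * X 0 * X 1 + (X 1) ^ 2 : MvPolynomial (Fin 2) ℝ) = ∑ i, (q i) ^ 2) ∧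
    ¬ ∃ (k : ℕ) (q : Fin k → MvPolynomial (Fin 2) ℝ),
        (∀ i, (q i).IsSymmetric) ∧
        ((X 0) ^ 2 - 2 * X 0 * X 1 + (X 1) ^ 2 : MvPolynomial (Fin 2) ℝ) = ∑ i, (q i) ^ 2 := by
  refine ⟨?_, ?_, ?_⟩
  · intro σ
    have h : σ = Equiv.refl (Fin 2) ∨ σ = Equiv.swap 0 1 := by revert σ; decide
    rcases h with h | h <;> subst h <;>
      simp [rename_X, map_ofNat, Equiv.swap_apply_left, Equiv.swap_apply_right] <;> ring
  · exact ⟨1, ![X 0 - X 1], by simp [Fin.sum_univ_one]; ring⟩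
  · rintro ⟨k, q, hsym, heq⟩
    set v : Fin 2 → Polynomial ℝ := ![Polynomial.X, -Polynomial.X] with hv
    set g : Fin k → Polynomial ℝ := fun i => aeval v (q i) with hg
    -- sum of squares identity in one variable
    have hA : (∑ i, (g i) ^ 2) = 4 * Polynomial.X ^ 2 := by
      have := congrArg (aeval v) heq
      simp only [map_add, map_sub, map_mul, map_pow, map_sum, aeval_X, map_ofNat] at this
      rw [← this]
      simp [hv]
      ring
    -- each g i is even : g i ∘ (-X) = g i
    have heven : ∀ i, (g i).comp (-Polynomial.X) = g i := by
      intro i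
      have hs := hsym i (Equiv.swap 0 1)
      have h1 : aeval (v ∘ (Equiv.swap 0 1)) (q i) = g i := by
        rw [← aeval_rename, hs]
      have h2 : v ∘ (Equiv.swap 0 1) = ![-Polynomial.X, Polynomial.X] := by
        funext j; fin_cases j <;> simp [hv]
      rw [h2] at h1
      have h4 : Polynomial.aeval (-Polynomial.X : Polynomial ℝ) (g i)
          = aeval (fun j => Polynomial.aeval (-Polynomial.X : Polynomial ℝ) (v j)) (q i) :=
        comp_aeval_apply v (Polynomial.aeval (-Polynomial.X : Polynomial ℝ)) (q i)
      have hfun : (fun j => Polynomial.aeval (-Polynomial.X : Polynomial ℝ) (v j))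
          = ![-Polynomial.X, Polynomial.X] := by
        funext j; fin_cases j <;> simp [hv]
      rw [hfun] at h4
      rw [Polynomial.comp_eq_aeval, h4, h1]
    -- coeff 0 of each g i is 0
    have h0 : ∀ i, (g i).coeff 0 = 0 := by
      have : ∑ i, ((g i).coeff 0) ^ 2 = 0 := by
        have := congrArg (fun p => Polynomial.coeff p 0) hA
        simpa [Polynomial.finset_sum_coeff, pow_two, Polynomial.mul_coeff_zero] using this
      intro i
      have := (Finset.sum_eq_zero_iff_of_nonneg (fun i _ => sq_nonneg ((g i).coeff 0))).mp this
        i (Finset.mem_univ i)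
      exact pow_eq_zero_iff (n := 2) (by norm_num) |>.mp this
    -- coeff 1 of each g i is 0, by evenness
    have h1 : ∀ i, (g i).coeff 1 = 0 := by
      intro i
      have hd := congrArg Polynomial.derivative (heven i)
      rw [Polynomial.derivative_comp] at hd
      have he := congrArg (Polynomial.eval 0) hd
      simp [Polynomial.eval_comp] at he
      have h5 : (Polynomial.derivative (g i)).eval 0 = 0 := by linarith
      rw [← Polynomial.coeff_zero_eq_eval_zero, Polynomial.coeff_derivative] at h5
      simpa using h5
    -- coeff 2 contradiction
    have hc2 := congrArg (fun p => Polynomial.coeff p 2) hA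
    simp only [Polynomial.finset_sum_coeff] at hc2
    have hz : ∀ i ∈ Finset.univ, ((g i) ^ 2).coeff 2 = 0 := by
      intro i _
      rw [pow_two, Polynomial.coeff_mul]
      rw [show Finset.HasAntidiagonal.antidiagonal (2:ℕ) = {(0,2),(1,1),(2,0)} by decide]
      simp [h0 i, h1 i]
    rw [Finset.sum_eq_zero hz] at hc2
    simp [Polynomial.coeff_X_pow] at hc2
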